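/- First-order characterization of the prosumer's equilibrium offer (Theorem 2): let μ be an atomless probability measure on ℝ supported on the compact interval [0, C̄] with cumulative distribution function F, let u : ℝ → ℝ be concave and continuously differentiable, and let ρ ≥ 0, κ > 0 and d⁰ ∈ ℝ. If x* ∈ (0, C̄) maximizes π(x) = ρ·x + ∫ u(d⁰ + c − x) dμ(c) − κ·∫ (x − c)⁺ dμ(c) over [0, C̄], then κ·F(x*) = ρ − ∫ u'(d⁰ + c − x*) dμ(c). -/

import Mathlib

open MeasureTheory

/-- First-order characterization of the prosumer's equilibrium offer: if `μ` is
an atomless probability measure supported on `[0, C̄]` with cdf `F`, `u` is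
concave and continuously differentiable with derivative `u'`, `ρ ≥ 0`, `κ > 0`,
and `x* ∈ (0, C̄)` maximizes
`π(x) = ρ x + ∫ u(d⁰ + c - x) dμ(c) - κ ∫ (x - c)⁺ dμ(c)` over `[0, C̄]`, then
`κ F(x*) = ρ - ∫ u'(d⁰ + c - x*) dμ(c)`. -/
theorem prosumer_first_order_condition (Cbar : ℝ) (μ : Measure ℝ)
    [IsProbabilityMeasure μ] [NullSingletonClass μ] (hsupp : μ (Set.Icc 0 Cbar)ᶜ = 0)
    (u u' : ℝ → ℝ) (hu : ConcaveOn ℝ Set.univ u)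
    (hu' : ∀ z, HasDerivAt u (u' z) z) (hu'cont : Continuous u')
    (ρ κ : ℝ) (hρ : 0 ≤ ρ) (hκ : 0 < κ) (d0 : ℝ) (xstar : ℝ)
    (hx : xstar ∈ Set.Ioo 0 Cbar)
    (hmax : ∀ x ∈ Set.Icc 0 Cbar,
      ρ * x + (∫ c, u (d0 + c - x) ∂μ) - κ * (∫ c, max (x - c) 0 ∂μ) ≤
      ρ * xstar + (∫ c, u (d0 + c - xstar) ∂μ) -
        κ * ∫ c, max (xstar - c) 0 ∂μ) :
    κ * (μ (Set.Iic xstar)).toReal = ρ - ∫ c, u' (d0 + c - xstar) ∂μ := by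
  obtain ⟨hx0, hxC⟩ := hx
  have hucont : Continuous u :=
    continuous_iff_continuousAt.mpr fun z => (hu' z).continuousAt
  have hae : ∀ᵐ c ∂μ, c ∈ Set.Icc 0 Cbar := by
    rw [ae_iff]
    exact hsupp
  have haene : ∀ᵐ c ∂μ, c ≠ xstar := by
    rw [ae_iff]
    simpa using measure_singleton (μ := μ) xstar
  -- bound on u' on a compact interval
  obtain ⟨M, hM⟩ := (isCompact_Icc (a := d0 - xstar - 1) (b := d0 + Cbar - xstar + 1)).exists_bound_of_continuousOn hu'cont.continuousOn
  -- bound on u on a compact interval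
  obtain ⟨Mu, hMu⟩ := (isCompact_Icc (a := d0 - xstar) (b := d0 + Cbar - xstar)).exists_bound_of_continuousOn hucont.continuousOn
  -- derivative of the u-integral
  have hGu : HasDerivAt (fun x => ∫ c, u (d0 + c - x) ∂μ)
      (∫ c, -(u' (d0 + c - xstar)) ∂μ) xstar := by
    have := hasDerivAt_integral_of_dominated_loc_of_deriv_le (μ := μ)
      (F := fun x c => u (d0 + c - x)) (F' := fun x c => -(u' (d0 + c - x)))
      (x₀ := xstar) (s := Metric.ball xstar 1) (bound := fun _ => |M|) (Metric.ball_mem_nhds xstar one_pos)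
      (Filter.Eventually.of_forall fun x =>
        (hucont.comp ((continuous_const.add continuous_id).sub continuous_const)).aestronglyMeasurable)
      ?_ ((hu'cont.comp ((continuous_const.add continuous_id).sub continuous_const)).neg.aestronglyMeasurable) ?_
      (integrable_const _) ?_
    · exact this.2
    · refine (integrable_const Mu).mono'
        ((hucont.comp ((continuous_const.add continuous_id).sub continuous_const)).aestronglyMeasurable) ?_
      filter_upwards [hae] with c hc
      exact hMu _ ⟨by linarith [hc.1], by linarith [hc.2]⟩
    · filter_upwards [hae] with c hc x hxb
      rw [Metric.mem_ball, Real.dist_eq, abs_lt] at hxb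
      rw [norm_neg]
      exact (hM _ ⟨by linarith [hc.1, hxb.2], by linarith [hc.2, hxb.1]⟩).trans
        (le_abs_self M)
    · refine Filter.Eventually.of_forall fun c => fun x _ => ?_
      have h1 : HasDerivAt (fun y => d0 + c - y) (-1) x := by
        simpa using (hasDerivAt_id' x).const_sub (d0 + c)
      have := (hu' (d0 + c - x)).comp x h1
      simpa [mul_comm, Function.comp_def] using this
  -- derivative of the max-integral
  have hH : HasDerivAt (fun x => ∫ c, max (x - c) 0 ∂μ)
      (∫ c, Set.indicator (Set.Iio xstar) (fun _ => (1:ℝ)) c ∂μ) xstar := by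
    have := hasDerivAt_integral_of_dominated_loc_of_lip (μ := μ)
      (F := fun x c => max (x - c) 0)
      (F' := Set.indicator (Set.Iio xstar) (fun _ => (1:ℝ)))
      (x₀ := xstar) (s := Metric.ball xstar 1) (bound := fun _ => (1:ℝ)) (Metric.ball_mem_nhds xstar one_pos)
      (Filter.Eventually.of_forall fun x =>
        ((continuous_const.sub continuous_id).max continuous_const).aestronglyMeasurable)
      ?_ ?_ ?_ (integrable_const _) ?_
    · exact this.2
    · refine (integrable_const xstar).mono'
        ((continuous_const.sub continuous_id).max continuous_const).aestronglyMeasurable ?_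
      filter_upwards [hae] with c hc
      rw [Real.norm_eq_abs, abs_le]
      constructor
      · have : (0:ℝ) ≤ max (xstar - c) 0 := le_max_right _ _
        linarith
      · rcases le_total (xstar - c) 0 with h | h
        · simp [max_eq_right h]; linarith [hc.2]
        · rw [max_eq_left h]; linarith [hc.1]
    · exact ((measurable_const.indicator measurableSet_Iio).aestronglyMeasurable)
    · refine Filter.Eventually.of_forall fun c => ?_
      have : LipschitzWith 1 (fun x : ℝ => max (x - c) 0) := by
        have h1 : LipschitzWith 1 (fun x : ℝ => x - c) := by
          have : Isometry (fun x : ℝ => x - c) := Isometry.of_dist_eq fun a b => by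
            simp [Real.dist_eq]
          exact this.lipschitz
        exact h1.max_const 0
      simpa using this.lipschitzOnWith (s := Metric.ball xstar 1)
    · filter_upwards [haene] with c hc
      rcases lt_or_gt_of_ne hc with h | h
      · -- c < xstar : near xstar the function equals x - c
        have hev : (fun x => x - c) =ᶠ[nhds xstar] fun x => max (x - c) 0 := by
          filter_upwards [isOpen_Ioi.mem_nhds (show c < xstar from h)] with y hy
          rw [max_eq_left (by simp at hy; linarith)]
        have := ((hasDerivAt_id xstar).sub_const c).congr_of_eventuallyEq hev.symm
        simpa [Set.indicator_of_mem (show c ∈ Set.Iio xstar from h)] using this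
      · -- xstar < c : near xstar the function equals 0
        have hev : (fun _ : ℝ => (0:ℝ)) =ᶠ[nhds xstar] fun x => max (x - c) 0 := by
          filter_upwards [isOpen_Iio.mem_nhds (show xstar < c from h)] with y hy
          rw [max_eq_right (by simp at hy; linarith)]
        have := (hasDerivAt_const xstar (0:ℝ)).congr_of_eventuallyEq hev.symm
        simpa [Set.indicator_of_notMem (show c ∉ Set.Iio xstar from not_lt.mpr h.le)]
          using this
  -- total derivative
  have hπ : HasDerivAt (fun x => ρ * x + (∫ c, u (d0 + c - x) ∂μ)
      - κ * (∫ c, max (x - c) 0 ∂μ))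
      (ρ * 1 + (∫ c, -(u' (d0 + c - xstar)) ∂μ)
        - κ * (∫ c, Set.indicator (Set.Iio xstar) (fun _ => (1:ℝ)) c ∂μ)) xstar :=
    (((hasDerivAt_id xstar).const_mul ρ).add hGu).sub (hH.const_mul κ)
  have hlocmax : IsLocalMax (fun x => ρ * x + (∫ c, u (d0 + c - x) ∂μ)
      - κ * (∫ c, max (x - c) 0 ∂μ)) xstar := by
    filter_upwards [isOpen_Ioo.mem_nhds (show xstar ∈ Set.Ioo 0 Cbar from ⟨hx0, hxC⟩)] with y hy
    exact hmax y ⟨hy.1.le, hy.2.le⟩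
  have hzero := hlocmax.hasDerivAt_eq_zero hπ
  have hind : (∫ c, Set.indicator (Set.Iio xstar) (fun _ => (1:ℝ)) c ∂μ)
      = (μ (Set.Iic xstar)).toReal := by
    rw [show (∫ c, Set.indicator (Set.Iio xstar) (fun _ => (1:ℝ)) c ∂μ)
        = (μ (Set.Iio xstar)).toReal from integral_indicator_one measurableSet_Iio,
      measure_congr Iio_ae_eq_Iic]
  have hneg : (∫ c, -(u' (d0 + c - xstar)) ∂μ) = -∫ c, u' (d0 + c - xstar) ∂μ :=
    integral_neg _
  rw [hind, hneg] at hzero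
  linarith
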